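/- Iterated weak convergence of kernels (only-if direction): let E be a Polish space and K_N, K transition probability kernels on E such that for every bounded continuous f : E → ℝ and every convergent sequence x_N → x in E, ∫ f dK_N(x_N, ·) → ∫ f dK(x, ·). Then for every j ≥ 1 and every weakly convergent sequence of probability measures ν_N ⇒ ν on E, one has ν_N K_N^j ⇒ ν K^j weakly. -/

import Mathlib

open MeasureTheory ProbabilityTheory BoundedContinuousFunction Filter Topology
open scoped ENNReal NNReal

/-- The `j`-fold action of a transition kernel on a measure: `kernelIter K j ν = ν K^j`. -/
noncomputable def kernelIter {E : Type*} [MeasurableSpace E]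
    (K : Kernel E E) : ℕ → Measure E → Measure E
  | 0, ν => ν
  | (j + 1), ν => (kernelIter K j ν).bind K

section Aux

variable {E : Type*} [TopologicalSpace E] [PolishSpace E] [MeasurableSpace E] [BorelSpace E]

lemma isProbabilityMeasure_bind (μ : Measure E) [IsProbabilityMeasure μ]
    (κ : Kernel E E) [IsMarkovKernel κ] : IsProbabilityMeasure (μ.bind κ) := by
  constructor
  rw [Measure.bind_apply MeasurableSet.univ κ.measurable.aemeasurable]
  simp [measure_univ]

lemma kernelIter_isProbabilityMeasure (κ : Kernel E E) [IsMarkovKernel κ] :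
    ∀ (j : ℕ) (ν : Measure E), IsProbabilityMeasure ν →
      IsProbabilityMeasure (kernelIter κ j ν)
  | 0, ν, h => h
  | (j+1), ν, h => by
    haveI := kernelIter_isProbabilityMeasure κ j ν h
    exact isProbabilityMeasure_bind _ κ

lemma integral_bcf_eq (f : E →ᵇ ℝ) (m : Measure E) [IsProbabilityMeasure m] :
    ∫ y, f y ∂m = (∫⁻ y, ENNReal.ofReal (f y + ‖f‖) ∂m).toReal - ‖f‖ := by
  have hnn : ∀ y, 0 ≤ f y + ‖f‖ := fun y => by
    have h := f.norm_coe_le_norm y; rw [Real.norm_eq_abs] at h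
    linarith [(abs_le.mp h).1]
  have h1 : ∫ y, (f y + ‖f‖) ∂m = (∫⁻ y, ENNReal.ofReal (f y + ‖f‖) ∂m).toReal :=
    integral_eq_lintegral_of_nonneg_ae (ae_of_all _ hnn)
      ((f.continuous.measurable.add measurable_const).aestronglyMeasurable)
  have h2 : ∫ y, (f y + ‖f‖) ∂m = (∫ y, f y ∂m) + ‖f‖ := by
    rw [integral_add (f.integrable m) (integrable_const _), integral_const]
    simp [measure_univ]
  linarith

lemma norm_integral_bcf_le (f : E →ᵇ ℝ) (m : Measure E) [IsProbabilityMeasure m] :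
    ‖∫ y, f y ∂m‖ ≤ ‖f‖ := by
  have h := norm_integral_le_of_norm_le_const (μ := m) (C := ‖f‖)
    (ae_of_all _ fun y => f.norm_coe_le_norm y)
  simpa [measure_univ] using h

lemma measurable_integral_kernel (κ : Kernel E E) [IsMarkovKernel κ] (f : E →ᵇ ℝ) :
    Measurable fun x => ∫ z, f z ∂(κ x) := by
  have h : (fun x => ∫ z, f z ∂(κ x))
      = fun x => (∫⁻ z, ENNReal.ofReal (f z + ‖f‖) ∂(κ x)).toReal - ‖f‖ :=
    funext fun x => integral_bcf_eq f (κ x)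
  rw [h]
  exact (((Measure.measurable_lintegral
    ((f.continuous.measurable.add measurable_const).ennreal_ofReal)).comp
      κ.measurable).ennreal_toReal).sub measurable_const

lemma integral_bcf_bind (μ : Measure E) [IsProbabilityMeasure μ]
    (κ : Kernel E E) [IsMarkovKernel κ] (f : E →ᵇ ℝ) :
    ∫ y, f y ∂(μ.bind κ) = ∫ x, ∫ y, f y ∂(κ x) ∂μ := by
  haveI := isProbabilityMeasure_bind μ κ
  set g : E → ℝ≥0∞ := fun y => ENNReal.ofReal (f y + ‖f‖) with hgdef
  have hg : Measurable g := (f.continuous.measurable.add measurable_const).ennreal_ofReal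
  have hfb : ∀ y, f y + ‖f‖ ≤ ‖f‖ + ‖f‖ := fun y => by
    have h := f.norm_coe_le_norm y; rw [Real.norm_eq_abs] at h
    linarith [(abs_le.mp h).2]
  have hfin : ∀ (m : Measure E), IsProbabilityMeasure m →
      (∫⁻ y, g y ∂m) ≤ ENNReal.ofReal (‖f‖ + ‖f‖) := by
    intro m hm
    calc ∫⁻ y, g y ∂m ≤ ∫⁻ _, ENNReal.ofReal (‖f‖ + ‖f‖) ∂m :=
          lintegral_mono fun y => ENNReal.ofReal_le_ofReal (hfb y)
    _ = ENNReal.ofReal (‖f‖ + ‖f‖) := by rw [lintegral_const, measure_univ, mul_one]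
  rw [integral_bcf_eq f (μ.bind κ), Measure.lintegral_bind κ.measurable.aemeasurable hg.aemeasurable]
  have hmi : Measurable fun x => ∫⁻ y, g y ∂(κ x) :=
    (Measure.measurable_lintegral hg).comp κ.measurable
  have h3 : ∫ x, ∫ y, f y ∂(κ x) ∂μ = ∫ x, ((∫⁻ y, g y ∂(κ x)).toReal - ‖f‖) ∂μ :=
    integral_congr_ae (ae_of_all _ fun x => integral_bcf_eq f (κ x))
  rw [h3]
  have hint : Integrable (fun x => (∫⁻ y, g y ∂(κ x)).toReal) μ := by
    refine ⟨hmi.ennreal_toReal.aestronglyMeasurable,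
      HasFiniteIntegral.of_bounded (C := ‖f‖ + ‖f‖) (ae_of_all _ fun x => ?_)⟩
    rw [Real.norm_eq_abs, abs_of_nonneg ENNReal.toReal_nonneg]
    calc (∫⁻ y, g y ∂(κ x)).toReal ≤ (ENNReal.ofReal (‖f‖ + ‖f‖)).toReal :=
          ENNReal.toReal_mono ENNReal.ofReal_ne_top (hfin (κ x) inferInstance)
    _ = ‖f‖ + ‖f‖ := ENNReal.toReal_ofReal (by positivity)
  rw [integral_sub hint (integrable_const _), integral_const]
  simp only [measure_univ, probReal_univ, ENNReal.toReal_one, smul_eq_mul, one_mul]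
  rw [integral_toReal hmi.aemeasurable
    (ae_of_all _ fun x => lt_of_le_of_lt (hfin (κ x) inferInstance) ENNReal.ofReal_lt_top)]

section Kernels

variable (K : ℕ → Kernel E E) (K₀ : Kernel E E)

lemma hker_subseq [∀ N, IsMarkovKernel (K N)] [IsMarkovKernel K₀]
    (hker : ∀ f : E →ᵇ ℝ, ∀ (x : ℕ → E) (x₀ : E), Tendsto x atTop (𝓝 x₀) →
      Tendsto (fun N => ∫ z, f z ∂(K N (x N))) atTop (𝓝 (∫ z, f z ∂(K₀ x₀))))
    (f : E →ᵇ ℝ) {φ : ℕ → ℕ} (hφ : StrictMono φ) {y : ℕ → E} {x₀ : E}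
    (hy : Tendsto y atTop (𝓝 x₀)) :
    Tendsto (fun k => ∫ z, f z ∂(K (φ k) (y k))) atTop (𝓝 (∫ z, f z ∂(K₀ x₀))) := by
  classical
  set z : ℕ → E := fun N => if h : ∃ k, φ k = N then y h.choose else x₀ with hz
  have hzφ : ∀ k, z (φ k) = y k := by
    intro k
    have h : ∃ k', φ k' = φ k := ⟨k, rfl⟩
    simp only [hz, dif_pos h]
    congr 1
    exact hφ.injective h.choose_spec
  have hztend : Tendsto z atTop (𝓝 x₀) := by
    rw [Filter.tendsto_atTop']
    intro U hU
    obtain ⟨a, ha⟩ := Filter.tendsto_atTop'.mp hy U hU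
    refine ⟨φ a, fun N hN => ?_⟩
    by_cases h : ∃ k, φ k = N
    · simp only [hz, dif_pos h]
      apply ha
      have h1 : φ h.choose = N := h.choose_spec
      have h2 : φ a ≤ φ h.choose := by rw [h1]; exact hN
      exact hφ.le_iff_le.mp h2
    · simp only [hz, dif_neg h]
      exact mem_of_mem_nhds hU
  have h := (hker f z x₀ hztend).comp hφ.tendsto_atTop
  refine h.congr fun k => ?_
  simp only [Function.comp_apply]
  rw [hzφ k]

lemma continuous_integral_K₀ [∀ N, IsMarkovKernel (K N)] [IsMarkovKernel K₀]
    (hker : ∀ f : E →ᵇ ℝ, ∀ (x : ℕ → E) (x₀ : E), Tendsto x atTop (𝓝 x₀) →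
      Tendsto (fun N => ∫ z, f z ∂(K N (x N))) atTop (𝓝 (∫ z, f z ∂(K₀ x₀))))
    (f : E →ᵇ ℝ) :
    Continuous fun x => ∫ z, f z ∂(K₀ x) := by
  letI := TopologicalSpace.upgradeIsCompletelyMetrizable E
  apply SeqContinuous.continuous
  intro x x₀ hx
  set g : E → ℝ := fun w => ∫ z, f z ∂(K₀ w) with hgdef
  have hP : ∀ k, ∀ᶠ N in atTop, |(∫ z, f z ∂(K N (x k))) - g (x k)| < 1/(k+1) := by
    intro k
    have h := hker f (fun _ => x k) (x k) tendsto_const_nhds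
    have hpos : (0:ℝ) < 1/(k+1) := by positivity
    have h2 := Metric.tendsto_nhds.mp h _ hpos
    simpa [Real.dist_eq] using h2
  obtain ⟨φ, hφ, hφP⟩ := Filter.extraction_forall_of_eventually hP
  have hA : Tendsto (fun k => ∫ z, f z ∂(K (φ k) (x k))) atTop (𝓝 (g x₀)) :=
    hker_subseq K K₀ hker f hφ hx
  have hdiff : Tendsto (fun k => g (x k) - ∫ z, f z ∂(K (φ k) (x k))) atTop (𝓝 0) := by
    refine squeeze_zero_norm (fun k => ?_) tendsto_one_div_add_atTop_nhds_zero_nat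
    rw [Real.norm_eq_abs, abs_sub_comm]
    exact_mod_cast (hφP k).le
  have h := hdiff.add hA
  rw [zero_add] at h
  refine h.congr fun k => ?_
  simp

lemma tight_of_weak_conv [Nonempty E]
    (ν : ℕ → Measure E) (hν : ∀ N, IsProbabilityMeasure (ν N))
    (ν₀ : Measure E) (hν₀ : IsProbabilityMeasure ν₀)
    (hconv : ∀ g : E →ᵇ ℝ, Tendsto (fun N => ∫ x, g x ∂(ν N)) atTop (𝓝 (∫ x, g x ∂ν₀)))
    {ε : ℝ≥0∞} (hε : 0 < ε) :
    ∃ C : Set E, IsCompact C ∧ ∀ N, ν N Cᶜ ≤ ε := by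
  letI := TopologicalSpace.upgradeIsCompletelyMetrizable E
  obtain ⟨u, hu⟩ := TopologicalSpace.exists_dense_seq E
  set B : ℕ → ℕ → Set E := fun k n => ⋃ i < n, Metric.ball (u i) (1/(k+1)) with hB
  have hBopen : ∀ k n, IsOpen (B k n) := fun k n =>
    isOpen_biUnion fun i _ => Metric.isOpen_ball
  have hBmono : ∀ k, Monotone (B k) := by
    intro k n m hnm
    exact Set.biUnion_subset_biUnion_left fun i (hi : i < n) => lt_of_lt_of_le hi hnm
  have hBunion : ∀ k, (⋃ n, B k n) = Set.univ := by
    intro k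
    ext w
    simp only [Set.mem_iUnion, Set.mem_univ, iff_true]
    have hpos : (0:ℝ) < 1/(k+1) := by positivity
    obtain ⟨i, hi⟩ := hu.exists_dist_lt w hpos
    exact ⟨i+1, Set.mem_biUnion (Nat.lt_succ_self i)
      (by rwa [Metric.mem_ball])⟩
  have htend : ∀ (k : ℕ) (m : Measure E), IsProbabilityMeasure m →
      Tendsto (fun n => m (B k n)) atTop (𝓝 1) := by
    intro k m hm
    have h := tendsto_measure_iUnion_atTop (μ := m) (hBmono k)
    rwa [hBunion k, measure_univ] at h
  set P : ℕ → ProbabilityMeasure E := fun N => ⟨ν N, hν N⟩ with hPdef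
  set P₀ : ProbabilityMeasure E := ⟨ν₀, hν₀⟩ with hP₀def
  have hP : Tendsto P atTop (𝓝 P₀) :=
    ProbabilityMeasure.tendsto_iff_forall_integral_tendsto.mpr hconv
  have claim : ∀ (k : ℕ) (δ : ℝ≥0∞), 0 < δ → ∃ n, ∀ N, 1 - δ ≤ ν N (B k n) := by
    intro k δ hδ
    have h1δ : (1:ℝ≥0∞) - δ < 1 := ENNReal.sub_lt_self ENNReal.one_ne_top one_ne_zero hδ.ne'
    obtain ⟨n₀, hn₀⟩ := ((htend k ν₀ hν₀).eventually_const_lt h1δ).exists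
    have hlim : (ν₀ : Measure E) (B k n₀) ≤ atTop.liminf fun N => (ν N) (B k n₀) :=
      ProbabilityMeasure.le_liminf_measure_open_of_tendsto hP (hBopen k n₀)
    have hev : ∀ᶠ N in atTop, 1 - δ < ν N (B k n₀) :=
      Filter.eventually_lt_of_lt_liminf (lt_of_lt_of_le hn₀ hlim)
    obtain ⟨N₀, hN₀⟩ := Filter.eventually_atTop.mp hev
    have hind : ∀ N, ∃ n, 1 - δ < ν N (B k n) := fun N =>
      ((htend k (ν N) (hν N)).eventually_const_lt h1δ).exists
    choose nf hnf using hind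
    refine ⟨n₀ ⊔ (Finset.range N₀).sup nf, fun N => ?_⟩
    rcases le_or_gt N₀ N with h | h
    · exact le_of_lt (lt_of_lt_of_le (hN₀ N h) (measure_mono (hBmono k le_sup_left)))
    · exact le_of_lt (lt_of_lt_of_le (hnf N) (measure_mono (hBmono k
        (le_trans (Finset.le_sup (Finset.mem_range.mpr h)) le_sup_right))))
  have hδpos : ∀ k : ℕ, 0 < ε / 2^(k+1) :=
    fun k => ENNReal.div_pos hε.ne' (by simp)
  choose m hm using fun k => claim k (ε / 2^(k+1)) (hδpos k)
  set S : Set E := ⋂ k, closure (B k (m k)) with hS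
  have hSclosed : IsClosed S := isClosed_iInter fun k => isClosed_closure
  have hsub : ∀ k, closure (B k (m k)) ⊆ ⋃ i < m k, Metric.closedBall (u i) (1/(k+1)) := by
    intro k
    apply closure_minimal
    · exact Set.iUnion₂_mono fun i _ => Metric.ball_subset_closedBall
    · exact Set.Finite.isClosed_biUnion (Set.finite_Iio _) fun i _ => Metric.isClosed_closedBall
  have hStb : TotallyBounded S := by
    rw [Metric.totallyBounded_iff]
    intro r hr
    obtain ⟨k, hk⟩ := exists_nat_one_div_lt hr
    refine ⟨u '' Set.Iio (m k), (Set.finite_Iio _).image u, ?_⟩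
    intro w hw
    have hw1 : w ∈ closure (B k (m k)) := Set.mem_iInter.mp hw k
    obtain ⟨i, hi, hwi⟩ := Set.mem_iUnion₂.mp (hsub k hw1)
    exact Set.mem_biUnion (Set.mem_image_of_mem u hi)
      (Metric.closedBall_subset_ball hk hwi)
  have hScompact : IsCompact S := hStb.isCompact_of_isClosed hSclosed
  refine ⟨S, hScompact, fun N => ?_⟩
  have h1 : Sᶜ ⊆ ⋃ k, (B k (m k))ᶜ := by
    intro w hw
    rw [hS, Set.compl_iInter] at hw
    obtain ⟨k, hk⟩ := Set.mem_iUnion.mp hw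
    exact Set.mem_iUnion.mpr ⟨k, fun h => hk (subset_closure h)⟩
  have hgeom : ∑' k : ℕ, ε / 2^(k+1) = ε := by
    have h2 : ∀ k : ℕ, ε / 2^(k+1) = ε * 2⁻¹^(k+1) := by
      intro k
      rw [div_eq_mul_inv, ENNReal.inv_pow]
    simp_rw [h2]
    rw [ENNReal.tsum_mul_left, ENNReal.tsum_geometric_add_one, ENNReal.one_sub_inv_two,
      inv_inv]
    rw [ENNReal.inv_mul_cancel two_ne_zero ENNReal.ofNat_ne_top, mul_one]
  calc ν N Sᶜ ≤ ν N (⋃ k, (B k (m k))ᶜ) := measure_mono h1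
  _ ≤ ∑' k, ν N ((B k (m k))ᶜ) := measure_iUnion_le _
  _ ≤ ∑' k, ε / 2^(k+1) := by
      refine ENNReal.tsum_le_tsum fun k => ?_
      haveI := hν N
      rw [prob_compl_eq_one_sub (hBopen k (m k)).measurableSet]
      calc (1:ℝ≥0∞) - ν N (B k (m k)) ≤ 1 - (1 - ε / 2^(k+1)) :=
            tsub_le_tsub_left (hm k N) 1
      _ ≤ ε / 2^(k+1) := tsub_tsub_le
  _ = ε := hgeom

lemma step_weak_conv [∀ N, IsMarkovKernel (K N)] [IsMarkovKernel K₀]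
    (hker : ∀ f : E →ᵇ ℝ, ∀ (x : ℕ → E) (x₀ : E), Tendsto x atTop (𝓝 x₀) →
      Tendsto (fun N => ∫ z, f z ∂(K N (x N))) atTop (𝓝 (∫ z, f z ∂(K₀ x₀))))
    (ν : ℕ → Measure E) (hν : ∀ N, IsProbabilityMeasure (ν N))
    (ν₀ : Measure E) (hν₀ : IsProbabilityMeasure ν₀)
    (hconv : ∀ g : E →ᵇ ℝ, Tendsto (fun N => ∫ x, g x ∂(ν N)) atTop (𝓝 (∫ x, g x ∂ν₀)))
    (f : E →ᵇ ℝ) :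
    Tendsto (fun N => ∫ y, f y ∂((ν N).bind (K N))) atTop
      (𝓝 (∫ y, f y ∂(ν₀.bind K₀))) := by
  rcases isEmpty_or_nonempty E with hE | hE
  · exfalso
    have h1 := (hν 0).measure_univ
    rw [Set.univ_eq_empty_iff.mpr hE, measure_empty] at h1
    simp at h1
  haveI := hν₀
  set g : E → ℝ := fun x => ∫ z, f z ∂(K₀ x) with hgdef
  have gcont : Continuous g := continuous_integral_K₀ K K₀ hker f
  have gbdd : ∀ x, ‖g x‖ ≤ ‖f‖ := fun x => norm_integral_bcf_le f (K₀ x)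
  set G : E →ᵇ ℝ := BoundedContinuousFunction.ofNormedAddCommGroup g gcont ‖f‖ gbdd with hGdef
  have hGg : ∀ x, G x = g x := fun x => rfl
  have hG : Tendsto (fun N => ∫ x, G x ∂(ν N)) atTop (𝓝 (∫ x, G x ∂ν₀)) := hconv G
  set gg : ℕ → E → ℝ := fun N x => ∫ z, f z ∂(K N x) with hggdef
  have hmeasN : ∀ N, Measurable (gg N) := fun N => measurable_integral_kernel (K N) f
  have hbddN : ∀ N x, ‖gg N x‖ ≤ ‖f‖ := fun N x => norm_integral_bcf_le f (K N x)
  have hmeasg : Measurable g := gcont.measurable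
  have hintN : ∀ N, Integrable (gg N) (ν N) := fun N => by
    haveI := hν N
    exact ⟨(hmeasN N).aestronglyMeasurable,
      HasFiniteIntegral.of_bounded (ae_of_all _ (hbddN N))⟩
  have hintg : ∀ N, Integrable g (ν N) := fun N => by
    haveI := hν N
    exact ⟨hmeasg.aestronglyMeasurable, HasFiniteIntegral.of_bounded (ae_of_all _ gbdd)⟩
  have hd : Tendsto (fun N => ∫ x, (gg N x - g x) ∂(ν N)) atTop (𝓝 0) := by
    rw [NormedAddCommGroup.tendsto_nhds_zero]
    intro ε hε
    set M := ‖f‖ with hM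
    have hM0 : 0 ≤ M := norm_nonneg f
    set η : ℝ := ε / (4 * (M+1)) with hη
    have hηpos : 0 < η := by positivity
    obtain ⟨C, hC, hCν⟩ := tight_of_weak_conv ν hν ν₀ hν₀ hconv
      (ε := ENNReal.ofReal η) (ENNReal.ofReal_pos.mpr hηpos)
    set a : ℕ → ℝ := fun N => sSup ((fun x => |gg N x - g x|) '' C) with ha
    have hbddS : ∀ N y, y ∈ ((fun x => |gg N x - g x|) '' C) → y ≤ 2*M := by
      rintro N y ⟨x, -, rfl⟩
      have h1 := hbddN N x; have h2 := gbdd x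
      rw [Real.norm_eq_abs] at h1 h2
      calc |gg N x - g x| ≤ |gg N x| + |g x| := by
            have := norm_sub_le (gg N x) (g x); simpa [Real.norm_eq_abs] using this
      _ ≤ 2*M := by linarith
    have hanonneg : ∀ N, 0 ≤ a N := by
      intro N
      rcases C.eq_empty_or_nonempty with h | ⟨x, hx⟩
      · simp [ha, h, Real.sSup_empty]
      · exact le_trans (abs_nonneg _)
          (le_csSup ⟨2*M, fun y hy => hbddS N y hy⟩ (Set.mem_image_of_mem _ hx))
    have hamem : ∀ N x, x ∈ C → |gg N x - g x| ≤ a N := fun N x hx =>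
      le_csSup ⟨2*M, fun y hy => hbddS N y hy⟩ (Set.mem_image_of_mem _ hx)
    have haten : Tendsto a atTop (𝓝 0) := by
      by_contra hcon
      rw [Metric.tendsto_atTop] at hcon
      push_neg at hcon
      obtain ⟨ε₀, hε₀, hfreq⟩ := hcon
      have hfreq' : ∃ᶠ n in atTop, ε₀ ≤ a n := by
        rw [Filter.frequently_atTop]
        intro N₀
        obtain ⟨n, hn1, hn2⟩ := hfreq N₀
        refine ⟨n, hn1, ?_⟩
        rw [Real.dist_eq, sub_zero, abs_of_nonneg (hanonneg n)] at hn2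
        exact hn2
      obtain ⟨φ, hφ, hφspec⟩ := Filter.extraction_of_frequently_atTop hfreq'
      have hpt : ∀ k, ∃ x, x ∈ C ∧ ε₀/2 < |gg (φ k) x - g x| := by
        intro k
        have hne : ((fun x => |gg (φ k) x - g x|) '' C).Nonempty := by
          by_contra hne
          rw [Set.not_nonempty_iff_eq_empty] at hne
          have h0 : a (φ k) = 0 := by simp [ha, hne, Real.sSup_empty]
          have := hφspec k
          rw [h0] at this
          linarith
        have hlt : ε₀/2 < a (φ k) := by linarith [hφspec k]
        obtain ⟨y, ⟨x, hxC, rfl⟩, hy⟩ := exists_lt_of_lt_csSup hne hlt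
        exact ⟨x, hxC, hy⟩
      choose x hxC hxval using hpt
      obtain ⟨x₀, hx₀, ψ, hψ, hxψ⟩ := hC.tendsto_subseq hxC
      have hA : Tendsto (fun k => gg (φ (ψ k)) (x (ψ k))) atTop (𝓝 (g x₀)) :=
        hker_subseq K K₀ hker f (hφ.comp hψ) hxψ
      have hgx : Tendsto (fun k => g (x (ψ k))) atTop (𝓝 (g x₀)) :=
        (gcont.tendsto x₀).comp hxψ
      have hzero : Tendsto (fun k => gg (φ (ψ k)) (x (ψ k)) - g (x (ψ k))) atTop (𝓝 0) := by
        simpa using hA.sub hgx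
      have hev : ∀ᶠ k in atTop, |gg (φ (ψ k)) (x (ψ k)) - g (x (ψ k))| < ε₀/2 := by
        have h := Metric.tendsto_nhds.mp hzero (ε₀/2) (by linarith)
        simpa [Real.dist_eq] using h
      obtain ⟨k, hk⟩ := hev.exists
      exact absurd (hxval (ψ k)) (not_lt.mpr hk.le)
    have h2Mη : 2*M*η ≤ ε/2 := by
      rw [hη, show 2*M*(ε/(4*(M+1))) = (2*M*ε)/(4*(M+1)) by ring]
      rw [div_le_div_iff₀ (by positivity) (by norm_num : (0:ℝ) < 2)]
      nlinarith
    have hevA : ∀ᶠ N in atTop, a N < ε/2 := by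
      have h := Metric.tendsto_nhds.mp haten (ε/2) (by positivity)
      filter_upwards [h] with N hN
      rw [Real.dist_eq, sub_zero, abs_of_nonneg (hanonneg N)] at hN
      exact hN
    filter_upwards [hevA] with N hN
    haveI := hν N
    have hCm : MeasurableSet C := hC.isClosed.measurableSet
    have hint : Integrable (fun x => gg N x - g x) (ν N) := (hintN N).sub (hintg N)
    have hsplit : ∫ x, (gg N x - g x) ∂(ν N)
        = (∫ x in C, (gg N x - g x) ∂(ν N)) + ∫ x in Cᶜ, (gg N x - g x) ∂(ν N) :=
      (integral_add_compl hCm hint).symm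
    have h1 : ‖∫ x in C, (gg N x - g x) ∂(ν N)‖ ≤ a N := by
      have hb := norm_integral_le_of_norm_le_const (μ := (ν N).restrict C) (C := a N)
        ((ae_restrict_iff' hCm).mpr (ae_of_all _ fun x hx => by
          rw [Real.norm_eq_abs]; exact hamem N x hx))
      refine le_trans hb ?_
      have hle : ((ν N).restrict C) Set.univ ≤ 1 := by
        rw [Measure.restrict_apply MeasurableSet.univ, Set.univ_inter]
        exact prob_le_one
      have htr : (((ν N).restrict C) Set.univ).toReal ≤ 1 := by
        calc (((ν N).restrict C) Set.univ).toReal ≤ (1:ℝ≥0∞).toReal :=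
              ENNReal.toReal_mono ENNReal.one_ne_top hle
        _ = 1 := by simp
      calc a N * (((ν N).restrict C) Set.univ).toReal ≤ a N * 1 :=
            mul_le_mul_of_nonneg_left htr (hanonneg N)
      _ = a N := mul_one _
    have h2 : ‖∫ x in Cᶜ, (gg N x - g x) ∂(ν N)‖ ≤ 2*M*η := by
      have hb := norm_integral_le_of_norm_le_const (μ := (ν N).restrict Cᶜ) (C := 2*M)
        (ae_of_all _ fun x => by
          have h1' := hbddN N x; have h2' := gbdd x
          rw [Real.norm_eq_abs] at h1' h2' ⊢
          calc |gg N x - g x| ≤ |gg N x| + |g x| := by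
                have := norm_sub_le (gg N x) (g x); simpa [Real.norm_eq_abs] using this
          _ ≤ 2*M := by linarith)
      refine le_trans hb ?_
      have hle : ((ν N).restrict Cᶜ) Set.univ ≤ ENNReal.ofReal η := by
        rw [Measure.restrict_apply MeasurableSet.univ, Set.univ_inter]
        exact hCν N
      have htr : (((ν N).restrict Cᶜ) Set.univ).toReal ≤ η := by
        calc (((ν N).restrict Cᶜ) Set.univ).toReal ≤ (ENNReal.ofReal η).toReal :=
              ENNReal.toReal_mono ENNReal.ofReal_ne_top hle
        _ = η := ENNReal.toReal_ofReal hηpos.le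
      exact mul_le_mul_of_nonneg_left htr (by positivity)
    calc ‖∫ x, (gg N x - g x) ∂(ν N)‖
        ≤ ‖∫ x in C, (gg N x - g x) ∂(ν N)‖ + ‖∫ x in Cᶜ, (gg N x - g x) ∂(ν N)‖ := by
          rw [hsplit]; exact norm_add_le _ _
    _ ≤ a N + 2*M*η := add_le_add h1 h2
    _ < ε/2 + ε/2 := add_lt_add_of_lt_of_le hN h2Mη
    _ = ε := add_halves ε
  have hfinal : Tendsto (fun N => ∫ x, gg N x ∂(ν N)) atTop (𝓝 (∫ x, g x ∂ν₀)) := by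
    have hsum := hd.add hG
    rw [zero_add] at hsum
    have hsum' : Tendsto (fun N => (∫ x, (gg N x - g x) ∂(ν N)) + ∫ x, G x ∂(ν N))
        atTop (𝓝 (∫ x, g x ∂ν₀)) := by
      have : ∫ x, G x ∂ν₀ = ∫ x, g x ∂ν₀ := rfl
      rwa [this] at hsum
    refine hsum'.congr fun N => ?_
    haveI := hν N
    have hGint : ∫ x, G x ∂(ν N) = ∫ x, g x ∂(ν N) := rfl
    rw [hGint, integral_sub (hintN N) (hintg N)]
    ring
  have hrw : ∀ N, ∫ y, f y ∂((ν N).bind (K N)) = ∫ x, gg N x ∂(ν N) := fun N => by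
    haveI := hν N
    exact integral_bcf_bind (ν N) (K N) f
  have hrw₀ : ∫ y, f y ∂(ν₀.bind K₀) = ∫ x, g x ∂ν₀ := integral_bcf_bind ν₀ K₀ f
  rw [hrw₀]
  exact hfinal.congr fun N => (hrw N).symm

end Kernels

end Aux

/-- Iterated weak convergence of kernels (only-if direction): if
`∫ f dK_N(x_N,·) → ∫ f dK(x,·)` for every bounded continuous `f` and every `x_N → x`,
then `ν_N K_N^j ⇒ ν K^j` whenever `ν_N ⇒ ν`, for every `j ≥ 1`. -/
theorem kernel_iterated_weak_convergence
    {E : Type*} [TopologicalSpace E] [PolishSpace E] [MeasurableSpace E] [BorelSpace E]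
    (K : ℕ → Kernel E E) [∀ N, IsMarkovKernel (K N)]
    (K₀ : Kernel E E) [IsMarkovKernel K₀]
    (hker : ∀ f : E →ᵇ ℝ, ∀ (x : ℕ → E) (x₀ : E), Filter.Tendsto x Filter.atTop (nhds x₀) →
      Filter.Tendsto (fun N => ∫ z, f z ∂(K N (x N))) Filter.atTop
        (nhds (∫ z, f z ∂(K₀ x₀)))) :
    ∀ j : ℕ, 1 ≤ j →
      ∀ (ν : ℕ → Measure E), (∀ N, IsProbabilityMeasure (ν N)) →
      ∀ (ν₀ : Measure E), IsProbabilityMeasure ν₀ →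
      (∀ g : E →ᵇ ℝ, Filter.Tendsto (fun N => ∫ x, g x ∂(ν N)) Filter.atTop
        (nhds (∫ x, g x ∂ν₀))) →
      ∀ f : E →ᵇ ℝ,
        Filter.Tendsto (fun N => ∫ x, f x ∂(kernelIter (K N) j (ν N))) Filter.atTop
          (nhds (∫ x, f x ∂(kernelIter K₀ j ν₀))) := by
  have main : ∀ j : ℕ,
      ∀ (ν : ℕ → Measure E), (∀ N, IsProbabilityMeasure (ν N)) →
      ∀ (ν₀ : Measure E), IsProbabilityMeasure ν₀ →
      (∀ g : E →ᵇ ℝ, Filter.Tendsto (fun N => ∫ x, g x ∂(ν N)) Filter.atTop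
        (nhds (∫ x, g x ∂ν₀))) →
      ∀ f : E →ᵇ ℝ,
        Filter.Tendsto (fun N => ∫ x, f x ∂(kernelIter (K N) j (ν N))) Filter.atTop
          (nhds (∫ x, f x ∂(kernelIter K₀ j ν₀))) := by
    intro j
    induction j with
    | zero =>
      intro ν hν ν₀ hν₀ hconv f
      simpa [kernelIter] using hconv f
    | succ j ih =>
      intro ν hν ν₀ hν₀ hconv f
      have hμ : ∀ N, IsProbabilityMeasure (kernelIter (K N) j (ν N)) := fun N =>
        kernelIter_isProbabilityMeasure (K N) j (ν N) (hν N)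
      have hμ₀ : IsProbabilityMeasure (kernelIter K₀ j ν₀) :=
        kernelIter_isProbabilityMeasure K₀ j ν₀ hν₀
      have hconv' : ∀ g : E →ᵇ ℝ,
          Filter.Tendsto (fun N => ∫ x, g x ∂(kernelIter (K N) j (ν N))) Filter.atTop
            (nhds (∫ x, g x ∂(kernelIter K₀ j ν₀))) := ih ν hν ν₀ hν₀ hconv
      have h := step_weak_conv K K₀ hker
        (fun N => kernelIter (K N) j (ν N)) hμ (kernelIter K₀ j ν₀) hμ₀ hconv' f
      simpa [kernelIter] using h
  intro j _ ν hν ν₀ hν₀ hconv f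
  exact main j ν hν ν₀ hν₀ hconv f
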